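/- arXiv:1111.3705 — 2 statements merged into one kernel-verified Lean document; each statement's English description precedes it below -/
import Mathlib

section
/- Let ρ: G → GL_d(ℂ) be a representation, and for m ≥ 0 let h_m: G → ℂ be the class function assigning to g the coefficient of q^m in the formal power series (det(1 − q·ρ(g)))^{-1} ∈ ℂ[[q]] (the character of the m-th symmetric power of ρ). Let S(q) be the (n+1)×(n+1) matrix over ℂ[[q]] with entries S(q)^i_j = Σ_{m≥0} q^m · ⟨h_m·χ_i, χ_j⟩. Then for any 1 ≤ k ≤ n+1 and strictly increasing tuples 0 ≤ i_1 < … < i_k ≤ n, 0 ≤ j_1 < … < j_k ≤ n, the corresponding k×k minor of S(q) equals, in ℂ[[q]], (1/|G|^k) · Σ_{0 ≤ p_1 < … < p_k ≤ n} det(χ_{i_a}(g_{p_b})) · conj( det(χ_{j_a}(g_{p_b})) ) · Π_{m=1}^k |C_{p_m}|·(det(1 − q·ρ(g_{p_m})))^{-1}. -/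
open CategoryTheory
open scoped Classical

/-- Inner product of class functions: `⟨a, b⟩ = (1/|G|) Σ_{g∈G} a(g)·conj(b(g))`. -/
noncomputable def cgIP {G : Type*} [Group G] [Fintype G] (a b : G → ℂ) : ℂ :=
  (Fintype.card G : ℂ)⁻¹ * ∑ x : G, a x * (starRingEnd ℂ) (b x)

/-- The size of the conjugacy class of `x`. -/
noncomputable def classCard {G : Type*} [Group G] (x : G) : ℕ :=
  Nat.card {y : G // IsConj x y}

/-- `det(1 − q·ρ(g))` as an element of `ℂ[[q]]`. -/
noncomputable def molienDet {G : Type} [Group G] {d : ℕ}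
    (ρ : G →* Matrix.GeneralLinearGroup (Fin d) ℂ) (s : G) : PowerSeries ℂ :=
  Matrix.det ((1 : Matrix (Fin d) (Fin d) (PowerSeries ℂ)) -
    (PowerSeries.X : PowerSeries ℂ) •
      ((ρ s : Matrix (Fin d) (Fin d) ℂ)).map (PowerSeries.C))

section Molien

variable {G : Type} [Group G] {d : ℕ} (ρ : G →* Matrix.GeneralLinearGroup (Fin d) ℂ)

lemma molienDet_conj (t s : G) : molienDet ρ (t * s * t⁻¹) = molienDet ρ s := by
  set T : Matrix (Fin d) (Fin d) (PowerSeries ℂ) :=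
    ((ρ t : Matrix (Fin d) (Fin d) ℂ)).map (PowerSeries.C) with hT
  set T' : Matrix (Fin d) (Fin d) (PowerSeries ℂ) :=
    ((ρ t⁻¹ : Matrix (Fin d) (Fin d) ℂ)).map (PowerSeries.C) with hT'
  set Sm : Matrix (Fin d) (Fin d) (PowerSeries ℂ) :=
    ((ρ s : Matrix (Fin d) (Fin d) ℂ)).map (PowerSeries.C) with hSm
  have hTT' : T * T' = 1 := by
    rw [hT, hT', ← Matrix.map_mul]
    have : (ρ t : Matrix (Fin d) (Fin d) ℂ) * (ρ t⁻¹ : Matrix (Fin d) (Fin d) ℂ) = 1 := by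
      rw [← Matrix.GeneralLinearGroup.coe_mul, ← map_mul, mul_inv_cancel, map_one,
        Matrix.GeneralLinearGroup.coe_one]
    rw [this, Matrix.map_one _ (map_zero _) (map_one _)]
  have hmap : ((ρ (t * s * t⁻¹) : Matrix (Fin d) (Fin d) ℂ)).map (PowerSeries.C)
      = T * Sm * T' := by
    rw [hT, hT', hSm, ← Matrix.map_mul, ← Matrix.map_mul]
    congr 1
    rw [← Matrix.GeneralLinearGroup.coe_mul, ← Matrix.GeneralLinearGroup.coe_mul,
      ← map_mul, ← map_mul]
  have hconj : (1 : Matrix (Fin d) (Fin d) (PowerSeries ℂ)) - (PowerSeries.X : PowerSeries ℂ) • (T * Sm * T')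
      = T * ((1 : Matrix (Fin d) (Fin d) (PowerSeries ℂ)) - (PowerSeries.X : PowerSeries ℂ) • Sm) * T' := by
    rw [Matrix.mul_sub, Matrix.sub_mul, mul_one, hTT', Matrix.mul_smul, Matrix.smul_mul,
      mul_assoc]
  rw [molienDet, molienDet, hmap, hconj, Matrix.det_mul, Matrix.det_mul]
  have : T.det * ((1 - (PowerSeries.X : PowerSeries ℂ) • Sm).det) * T'.det
      = (1 - (PowerSeries.X : PowerSeries ℂ) • Sm).det * (T * T').det := by
    rw [Matrix.det_mul]; ring
  rw [this, hTT', Matrix.det_one, mul_one]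

end Molien

section CB

open Finset Equiv Equiv.Perm Matrix

variable {R : Type*} [CommRing R]

local notation "ε" σ => ((Equiv.Perm.sign σ : ℤ) : R)

lemma cb_aux {k : ℕ} {ι : Type*} [Fintype ι] [DecidableEq ι]
    (A : Matrix (Fin k) ι R) (B : Matrix ι (Fin k) R)
    {p : Fin k → ι} (H : ¬Function.Injective p) :
    (∑ σ : Equiv.Perm (Fin k), (ε σ) * ∏ x, A (σ x) (p x) * B (p x) x) = 0 := by
  obtain ⟨i, j, hpij, hij⟩ : ∃ i j, p i = p j ∧ i ≠ j := by
    rw [Function.Injective] at H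
    push_neg at H
    exact H
  exact
    sum_involution (fun σ _ => σ * Equiv.swap i j)
      (fun σ _ => by
        have : (∏ x, A (σ x) (p x)) = ∏ x, A ((σ * Equiv.swap i j) x) (p x) :=
          Fintype.prod_equiv (Equiv.swap i j) _ _ (by simp [Equiv.apply_swap_eq_self hpij])
        simp [this, sign_swap hij, -sign_swap', prod_mul_distrib])
      (fun σ _ _ => (not_congr mul_swap_eq_iff).mpr hij) (fun _ _ => mem_univ _) fun σ _ =>
      mul_swap_involutive i j σ

lemma sum_perm_eq {k : ℕ} (M N : Matrix (Fin k) (Fin k) R) :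
    ∑ τ : Equiv.Perm (Fin k), ∑ σ : Equiv.Perm (Fin k),
      (ε σ) * ∏ i, M (σ i) (τ i) * N (τ i) i = det M * det N :=
  calc
    (∑ τ : Equiv.Perm (Fin k), ∑ σ : Equiv.Perm (Fin k),
        (ε σ) * ∏ i, M (σ i) (τ i) * N (τ i) i)
    _ = ∑ σ : Equiv.Perm (Fin k), ∑ τ : Equiv.Perm (Fin k),
        (∏ i, N (σ i) i) * (ε τ) * ∏ j, M (τ j) (σ j) := by
      simp only [mul_comm, mul_left_comm, prod_mul_distrib, mul_assoc]
    _ = ∑ σ : Equiv.Perm (Fin k), ∑ τ : Equiv.Perm (Fin k),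
        (∏ i, N (σ i) i) * ((ε σ) * (ε τ)) * ∏ i, M (τ i) i :=
      (sum_congr rfl fun σ _ =>
        Fintype.sum_equiv (Equiv.mulRight σ⁻¹) _ _ fun τ => by
          have : (∏ j, M (τ j) (σ j)) = ∏ j, M ((τ * σ⁻¹) j) j := by
            rw [← (σ⁻¹ : _ ≃ _).prod_comp]
            simp only [Equiv.Perm.coe_mul, Equiv.Perm.coe_inv, Equiv.apply_symm_apply, Function.comp_apply]
          have h : ((ε σ) * ε (τ * σ⁻¹)) = ε τ :=
            calc
              ((ε σ) * ε (τ * σ⁻¹)) = ε (τ * σ⁻¹ * σ) := by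
                rw [mul_comm, sign_mul (τ * σ⁻¹)]
                simp only [Int.cast_mul, Units.val_mul]
              _ = ε τ := by simp only [inv_mul_cancel_right]
          simp_rw [Equiv.coe_mulRight, h]
          simp only [this])
    _ = det M * det N := by
      simp only [det_apply', Finset.mul_sum, mul_comm, mul_left_comm, mul_assoc]

noncomputable def sortPair {k : ℕ} {ι : Type*} [Fintype ι] [LinearOrder ι] (p : Fin k → ι) :
    (Fin k → ι) × Equiv.Perm (Fin k) := by
  classical
  exact if hp : Function.Injective p then
    have hc : (Finset.univ.image p).card = k := by
      rw [Finset.card_image_of_injective _ hp, Finset.card_univ, Fintype.card_fin]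
    ⟨fun i => (Finset.univ.image p).orderEmbOfFin hc i,
     Equiv.ofBijective (fun i => ((Finset.univ.image p).orderIsoOfFin hc).symm
         ⟨p i, by simp⟩)
       (Finite.injective_iff_bijective.mp (fun a b hab => hp (by
          have := congrArg (fun z => ((((Finset.univ.image p).orderIsoOfFin hc)) z : ι)) hab
          simpa using this)))⟩
  else ⟨p, 1⟩

lemma sortPair_strictMono {k : ℕ} {ι : Type*} [Fintype ι] [LinearOrder ι] {p : Fin k → ι}
    (hp : Function.Injective p) : StrictMono (sortPair p).1 := by
  classical
  rw [sortPair]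
  simp only [dif_pos hp]
  exact ((Finset.univ.image p).orderEmbOfFin _).strictMono

lemma sortPair_comp {k : ℕ} {ι : Type*} [Fintype ι] [LinearOrder ι] {p : Fin k → ι}
    (hp : Function.Injective p) : (sortPair p).1 ∘ (sortPair p).2 = p := by
  classical
  rw [sortPair]
  simp only [dif_pos hp]
  funext i
  simp only [Function.comp_apply, Equiv.ofBijective_apply, ← Finset.coe_orderIsoOfFin_apply,
    OrderIso.apply_symm_apply]

lemma sortPair_unique {k : ℕ} {ι : Type*} [Fintype ι] [LinearOrder ι] {P : Fin k → ι}
    (hP : StrictMono P) (τ : Equiv.Perm (Fin k)) : sortPair (P ∘ τ) = (P, τ) := by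
  classical
  have hinj : Function.Injective (P ∘ τ) := hP.injective.comp τ.injective
  have hc : (Finset.univ.image (P ∘ τ)).card = k := by
    rw [Finset.card_image_of_injective _ hinj, Finset.card_univ, Fintype.card_fin]
  have hmem : ∀ x, P x ∈ Finset.univ.image (P ∘ τ) := fun x =>
    Finset.mem_image.2 ⟨τ.symm x, Finset.mem_univ _, by simp⟩
  have h1 : (sortPair (P ∘ τ)).1 = P := by
    rw [sortPair]
    simp only [dif_pos hinj]
    exact (Finset.orderEmbOfFin_unique hc hmem hP).symm
  have h2comp := sortPair_comp hinj
  have h2 : (sortPair (P ∘ τ)).2 = τ := by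
    apply Equiv.coe_fn_injective
    funext i
    apply hP.injective
    have := congrFun h2comp i
    rw [Function.comp_apply, h1] at this
    exact this
  exact Prod.ext h1 h2

lemma cauchyBinet {k : ℕ} {ι : Type*} [Fintype ι] [LinearOrder ι]
    (A : Matrix (Fin k) ι R) (B : Matrix ι (Fin k) R) :
    (A * B).det = ∑ P ∈ Finset.univ.filter (fun P : Fin k → ι => StrictMono P),
      (A.submatrix id P).det * (B.submatrix P id).det := by
  classical
  have step1 : (A * B).det =
      ∑ p : Fin k → ι, ∑ σ : Equiv.Perm (Fin k), (ε σ) * ∏ i, A (σ i) (p i) * B (p i) i := by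
    rw [det_apply']
    simp only [Matrix.mul_apply, prod_univ_sum, mul_sum, Fintype.piFinset_univ]
    exact Finset.sum_comm
  have step2 : (∑ p : Fin k → ι, ∑ σ : Equiv.Perm (Fin k),
      (ε σ) * ∏ i, A (σ i) (p i) * B (p i) i) =
      ∑ p ∈ Finset.univ.filter (fun p : Fin k → ι => Function.Injective p),
        ∑ σ : Equiv.Perm (Fin k), (ε σ) * ∏ i, A (σ i) (p i) * B (p i) i := by
    refine (sum_subset (filter_subset _ _) fun p _ hp => cb_aux A B ?_).symm
    simpa using hp
  have step3 : (∑ q ∈ (Finset.univ.filter (fun P : Fin k → ι => StrictMono P)) ×ˢ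
        (Finset.univ : Finset (Equiv.Perm (Fin k))),
        ∑ σ : Equiv.Perm (Fin k), (ε σ) * ∏ i, A (σ i) ((q.1 ∘ q.2) i) * B ((q.1 ∘ q.2) i) i) =
      ∑ p ∈ Finset.univ.filter (fun p : Fin k → ι => Function.Injective p),
        ∑ σ : Equiv.Perm (Fin k), (ε σ) * ∏ i, A (σ i) (p i) * B (p i) i := by
    refine Finset.sum_nbij' (fun q => q.1 ∘ q.2) (fun p => sortPair p) ?_ ?_ ?_ ?_ ?_
    · rintro ⟨P, τ⟩ hq
      simp only [Finset.mem_product, Finset.mem_filter, Finset.mem_univ, true_and] at hq ⊢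
      exact (hq.1.injective.comp τ.injective)
    · intro p hp
      simp only [Finset.mem_filter, Finset.mem_univ, true_and] at hp
      simp only [Finset.mem_product, Finset.mem_filter, Finset.mem_univ, true_and]
      exact ⟨sortPair_strictMono hp, trivial⟩
    · rintro ⟨P, τ⟩ hq
      simp only [Finset.mem_product, Finset.mem_filter, Finset.mem_univ, true_and] at hq
      exact sortPair_unique hq.1 τ
    · intro p hp
      simp only [Finset.mem_filter, Finset.mem_univ, true_and] at hp
      exact sortPair_comp hp
    · intro q hq
      rfl
  rw [step1, step2, ← step3, Finset.sum_product]
  refine Finset.sum_congr rfl fun P hP => ?_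
  rw [← sum_perm_eq (A.submatrix id P) (B.submatrix P id)]
  rfl

end CB

theorem stmt3 {G : Type} [Group G] [Fintype G] {n : ℕ}
    (g : Fin (n + 1) → G) (hg1 : g 0 = 1)
    (hg : ∀ x : G, ∃! k : Fin (n + 1), IsConj (g k) x)
    (R : Fin (n + 1) → FDRep ℂ G)
    (hsimple : ∀ i, Simple (R i))
    (htriv : ∀ x : G, (R 0).character x = 1)
    (hdist : ∀ i j, i ≠ j → ¬ Nonempty (R i ≅ R j))
    {d : ℕ} (ρ : G →* Matrix.GeneralLinearGroup (Fin d) ℂ)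
    -- `h m s` : the character of the `m`-th symmetric power of `ρ`,
    -- i.e. the coefficient of `q^m` in `det(1 − q·ρ(s))⁻¹ ∈ ℂ[[q]]`
    (h : ℕ → G → ℂ)
    (hh : ∀ m s, h m s = PowerSeries.coeff m (molienDet ρ s)⁻¹)
    -- `S` : the graded Clebsch–Gordan matrix of the symmetric algebra of `ρ`
    (S : Matrix (Fin (n + 1)) (Fin (n + 1)) (PowerSeries ℂ))
    (hS : ∀ i j, S i j =
      PowerSeries.mk fun m => cgIP (fun s => h m s * (R i).character s) ((R j).character))
    (k : ℕ) (hk1 : 1 ≤ k) (hk2 : k ≤ n + 1)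
    (I J : Fin k → Fin (n + 1)) (hI : StrictMono I) (hJ : StrictMono J) :
    (S.submatrix I J).det =
      PowerSeries.C ((Fintype.card G : ℂ)⁻¹ ^ k) *
        ∑ P ∈ Finset.univ.filter (fun P : Fin k → Fin (n + 1) => StrictMono P),
          PowerSeries.C (Matrix.of fun a b : Fin k => (R (I a)).character (g (P b))).det *
            PowerSeries.C ((starRingEnd ℂ)
              (Matrix.of fun a b : Fin k => (R (J a)).character (g (P b))).det) *
            ∏ m : Fin k, ((classCard (g (P m)) : PowerSeries ℂ) *
              (molienDet ρ (g (P m)))⁻¹) := by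
  -- class-sum formula for class functions
  have hκ : ∀ x : G, IsConj (g ((hg x).choose)) x := fun x => (hg x).choose_spec.1
  have hκu : ∀ (x : G) (p : Fin (n + 1)), IsConj (g p) x → (hg x).choose = p :=
    fun x p hp => ((hg x).choose_spec.2 p hp).symm
  have classSum : ∀ f : G → ℂ, (∀ t s : G, f (t * s * t⁻¹) = f s) →
      ∑ x : G, f x = ∑ p : Fin (n + 1), (classCard (g p) : ℂ) * f (g p) := by
    intro f hf
    rw [← Finset.sum_fiberwise Finset.univ (fun x : G => (hg x).choose) f]
    refine Finset.sum_congr rfl fun p _ => ?_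
    have hfilter : Finset.univ.filter (fun x : G => (hg x).choose = p)
        = Finset.univ.filter (fun x : G => IsConj (g p) x) := by
      ext x
      simp only [Finset.mem_filter, Finset.mem_univ, true_and]
      constructor
      · rintro rfl; exact hκ x
      · exact hκu x p
    have hconst : ∀ x ∈ Finset.univ.filter (fun x : G => IsConj (g p) x), f x = f (g p) := by
      intro x hx
      simp only [Finset.mem_filter, Finset.mem_univ, true_and] at hx
      obtain ⟨c, hc⟩ := isConj_iff.mp hx
      rw [← hc, hf]
    have hcard : (Finset.univ.filter (fun x : G => IsConj (g p) x)).card = classCard (g p) := by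
      rw [classCard, Nat.card_eq_fintype_card, Fintype.card_subtype]
    rw [hfilter, Finset.sum_congr rfl hconst, Finset.sum_const, nsmul_eq_mul, hcard]
  -- invariance of the data under conjugation
  have hhconj : ∀ (m : ℕ) (t s : G), h m (t * s * t⁻¹) = h m s := by
    intro m t s
    rw [hh, hh, molienDet_conj]
  -- the key product formula for `S`
  have key : ∀ i j, S i j = ∑ p : Fin (n + 1),
      PowerSeries.C ((R i).character (g p)) *
        (PowerSeries.C ((Fintype.card G : ℂ)⁻¹ * (classCard (g p) : ℂ)) *
          (molienDet ρ (g p))⁻¹) *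
        PowerSeries.C ((starRingEnd ℂ) ((R j).character (g p))) := by
    intro i j
    rw [hS]
    refine PowerSeries.ext fun m => ?_
    rw [PowerSeries.coeff_mk, map_sum]
    have hterm : ∀ p : Fin (n + 1),
        (PowerSeries.coeff m) (PowerSeries.C ((R i).character (g p)) *
          (PowerSeries.C ((Fintype.card G : ℂ)⁻¹ * (classCard (g p) : ℂ)) *
            (molienDet ρ (g p))⁻¹) *
          PowerSeries.C ((starRingEnd ℂ) ((R j).character (g p))))
        = ((R i).character (g p) * ((Fintype.card G : ℂ)⁻¹ * (classCard (g p) : ℂ)) *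
            (starRingEnd ℂ) ((R j).character (g p))) *
          PowerSeries.coeff m (molienDet ρ (g p))⁻¹ := by
      intro p
      have : PowerSeries.C ((R i).character (g p)) *
          (PowerSeries.C ((Fintype.card G : ℂ)⁻¹ * (classCard (g p) : ℂ)) *
            (molienDet ρ (g p))⁻¹) *
          PowerSeries.C ((starRingEnd ℂ) ((R j).character (g p)))
          = PowerSeries.C ((R i).character (g p) *
              ((Fintype.card G : ℂ)⁻¹ * (classCard (g p) : ℂ)) *
              (starRingEnd ℂ) ((R j).character (g p))) * (molienDet ρ (g p))⁻¹ := by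
        simp only [map_mul]; ring
      rw [this, PowerSeries.coeff_C_mul]
    rw [Finset.sum_congr rfl fun p _ => hterm p]
    simp only [cgIP]
    rw [classSum (fun x => h m x * (R i).character x * (starRingEnd ℂ) ((R j).character x))
      (fun t s => by rw [hhconj, FDRep.char_conj, FDRep.char_conj])]
    rw [Finset.mul_sum]
    refine Finset.sum_congr rfl fun p _ => ?_
    rw [hh]
    ring
  -- the two matrices for Cauchy–Binet
  set A₁ : Matrix (Fin k) (Fin (n + 1)) (PowerSeries ℂ) := fun a p =>
    PowerSeries.C ((R (I a)).character (g p)) *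
      (PowerSeries.C ((Fintype.card G : ℂ)⁻¹ * (classCard (g p) : ℂ)) *
        (molienDet ρ (g p))⁻¹) with hA₁
  set B₁ : Matrix (Fin (n + 1)) (Fin k) (PowerSeries ℂ) := fun p b =>
    PowerSeries.C ((starRingEnd ℂ) ((R (J b)).character (g p))) with hB₁
  have hsub : S.submatrix I J = A₁ * B₁ := by
    refine Matrix.ext fun a b => ?_
    rw [Matrix.submatrix_apply, key, Matrix.mul_apply]
  rw [hsub, cauchyBinet, Finset.mul_sum]
  refine Finset.sum_congr rfl fun P hP => ?_
  -- compute det of the A-part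
  have eA : A₁.submatrix id P = Matrix.of (fun a b : Fin k =>
      (PowerSeries.C ((Fintype.card G : ℂ)⁻¹ * (classCard (g (P b)) : ℂ)) *
        (molienDet ρ (g (P b)))⁻¹) *
      (Matrix.of (fun a b : Fin k =>
        PowerSeries.C ((R (I a)).character (g (P b)))) a b)) := by
    refine Matrix.ext fun a b => mul_comm _ _
  have dA : (A₁.submatrix id P).det =
      (∏ b : Fin k, PowerSeries.C ((Fintype.card G : ℂ)⁻¹ * (classCard (g (P b)) : ℂ)) *
        (molienDet ρ (g (P b)))⁻¹) *
      PowerSeries.C ((Matrix.of fun a b : Fin k => (R (I a)).character (g (P b))).det) := by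
    rw [eA, Matrix.det_mul_row]
    congr 1
    have : (Matrix.of (fun a b : Fin k => PowerSeries.C ((R (I a)).character (g (P b)))))
        = (PowerSeries.C).mapMatrix (Matrix.of fun a b : Fin k =>
            (R (I a)).character (g (P b))) := rfl
    rw [this, ← RingHom.map_det]
  -- compute det of the B-part
  have dB : (B₁.submatrix P id).det =
      PowerSeries.C ((starRingEnd ℂ)
        ((Matrix.of fun a b : Fin k => (R (J a)).character (g (P b))).det)) := by
    have hBrw : B₁.submatrix P id =
        ((PowerSeries.C).comp ((starRingEnd ℂ) : ℂ →+* ℂ)).mapMatrix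
          ((Matrix.of fun a b : Fin k => (R (J a)).character (g (P b))).transpose) := rfl
    rw [hBrw, ← RingHom.map_det, Matrix.det_transpose, RingHom.comp_apply]
  rw [dA, dB]
  have hprod : (∏ b : Fin k,
        PowerSeries.C ((Fintype.card G : ℂ)⁻¹ * (classCard (g (P b)) : ℂ)) *
          (molienDet ρ (g (P b)))⁻¹)
      = PowerSeries.C ((Fintype.card G : ℂ)⁻¹ ^ k) *
        ∏ m : Fin k, ((classCard (g (P m)) : PowerSeries ℂ) * (molienDet ρ (g (P m)))⁻¹) := by
    have hterm : ∀ b : Fin k,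
        PowerSeries.C ((Fintype.card G : ℂ)⁻¹ * (classCard (g (P b)) : ℂ)) *
          (molienDet ρ (g (P b)))⁻¹
        = PowerSeries.C ((Fintype.card G : ℂ)⁻¹) *
            ((classCard (g (P b)) : PowerSeries ℂ) * (molienDet ρ (g (P b)))⁻¹) := by
      intro b
      rw [map_mul, map_natCast]
      ring
    rw [Finset.prod_congr rfl (fun b _ => hterm b), Finset.prod_mul_distrib,
      Finset.prod_const, Finset.card_univ, Fintype.card_fin, ← map_pow]
  rw [hprod]
  ring
end

section
/- Let ρ: G → GL_d(ℂ) be a representation with d ≥ 1 and let S(q) be the (n+1)×(n+1) Molien matrix over ℂ(q) with entries S(q)^i_j = (1/|G|) Σ_{k=0}^n |C_k|·χ_i(g_k)·conj(χ_j(g_k)) / det(1 − q·ρ(g_k)). Let n_1, …, n_d be positive integers and suppose that every entry of the matrix D(q) := (Π_{t=1}^d (1 − q^{n_t})) · S(q) is a polynomial in ℂ[q]. Let B be the (n+1)×(n+1) complex matrix with entries B^i_j = (1/|G|) Σ_{k=0}^n |C_k|·χ_i(g_k)·conj(χ_j(g_k))·det(1 − ρ(g_k)). Then for every 0 ≤ i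 ≤ d−1, the matrix D^{(i)}(1)·B^{i+1} is zero, where D^{(i)}(1) denotes the entrywise i-th derivative of D(q) evaluated at q = 1 and B^{i+1} is the (i+1)-st matrix power of B. -/
open CategoryTheory
open scoped Classical

/-- `det(1 − q·ρ(g))` as an element of the field `ℂ(q)` of rational functions. -/
noncomputable def molienDetRat {G : Type} [Group G] {d : ℕ}
    (ρ : G →* Matrix.GeneralLinearGroup (Fin d) ℂ) (s : G) : RatFunc ℂ :=
  Matrix.det ((1 : Matrix (Fin d) (Fin d) (RatFunc ℂ)) -
    ((ρ s : Matrix (Fin d) (Fin d) ℂ)).map fun a => RatFunc.X * RatFunc.C a)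

lemma pow_eq_pow_mod_of_pow_eq_one {M : Type*} [Monoid M] {u : M} {m : ℕ} (h : u ^ m = 1)
    (a : ℕ) : u ^ a = u ^ (a % m) := by
  conv_lhs => rw [← Nat.div_add_mod a m, pow_add, pow_mul, h, one_pow, one_mul]

lemma aux_root_sum {m : ℕ} [NeZero m] {ω : ℂ} (hω : IsPrimitiveRoot ω m) (c : ZMod m) :
    ∑ a : ZMod m, ω ^ (a * c).val = if c = 0 then (m : ℂ) else 0 := by
  have hωm : ω ^ m = 1 := hω.pow_eq_one
  by_cases hc : c = 0
  · subst hc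
    simp [ZMod.val_zero, Finset.card_univ, ZMod.card]
  · rw [if_neg hc]
    have hval : ∀ a : ZMod m, ω ^ (a * c).val = (ω ^ c.val) ^ a.val := by
      intro a
      rw [← pow_mul, ZMod.val_mul, ← pow_eq_pow_mod_of_pow_eq_one hωm, mul_comm]
    simp only [hval]
    have hζ : (ω ^ c.val) ≠ 1 := by
      apply hω.pow_ne_one_of_pos_of_lt
      · exact fun h => hc ((ZMod.val_eq_zero c).mp h)
      · exact ZMod.val_lt c
    obtain ⟨m', hm'⟩ := Nat.exists_eq_succ_of_ne_zero (NeZero.ne m)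
    subst hm'
    have : ∑ a : ZMod (m' + 1), (ω ^ c.val) ^ a.val
        = ∑ a ∈ Finset.range (m' + 1), (ω ^ c.val) ^ a :=
      Fin.sum_univ_eq_sum_range _ _
    rw [this, geom_sum_eq hζ, ← pow_mul, mul_comm c.val, pow_mul, hωm, one_pow,
      sub_self, zero_div]

open Polynomial in
lemma char_inv_eq_conj {G : Type} [Group G] [Fintype G] (V : FDRep ℂ G) (x : G) :
    (starRingEnd ℂ) (V.character x) = V.character x⁻¹ := by
  classical
  rcases eq_or_lt_of_le (Nat.one_le_iff_ne_zero.mpr (Fintype.card_ne_zero (α := G))) with hm1 | hm2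
  · -- trivial group
    haveI : Subsingleton G := Fintype.card_le_one_iff_subsingleton.mp (le_of_eq hm1.symm)
    have hx : x = 1 := Subsingleton.elim x 1
    subst hx
    rw [inv_one, FDRep.char_one]
    simp
  set m := Fintype.card G with hmdef
  haveI : NeZero m := ⟨(Nat.zero_lt_of_lt hm2).ne'⟩
  haveI : Fact (1 < m) := ⟨hm2⟩
  set f : Module.End ℂ V := V.ρ x with hfdef
  have hf : f ^ m = 1 := by
    rw [hfdef, ← map_pow, pow_card_eq_one, map_one]
  set ω : ℂ := Complex.exp (2 * Real.pi * Complex.I / m) with hωdef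
  have hω : IsPrimitiveRoot ω m := Complex.isPrimitiveRoot_exp m (NeZero.ne m)
  have hωm : ω ^ m = 1 := hω.pow_eq_one
  set e : ZMod m → ℂ := fun j => ω ^ j.val with hedef
  set F : ZMod m → Module.End ℂ V := fun j => f ^ j.val with hFdef
  have he_add : ∀ u v : ZMod m, e (u + v) = e u * e v := by
    intro u v
    simp only [hedef]
    rw [ZMod.val_add, ← pow_eq_pow_mod_of_pow_eq_one hωm, pow_add]
  have hF_add : ∀ u v : ZMod m, F (u + v) = F u * F v := by
    intro u v
    simp only [hFdef]
    rw [ZMod.val_add, ← pow_eq_pow_mod_of_pow_eq_one hf, pow_add]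
  have he0 : e 0 = 1 := by simp [hedef, ZMod.val_zero]
  have hF0 : F 0 = 1 := by simp [hFdef, ZMod.val_zero]
  have hsum : ∀ c : ZMod m, ∑ a : ZMod m, e (a * c) = if c = 0 then (m : ℂ) else 0 := by
    intro c
    simpa [hedef] using aux_root_sum hω c
  set P : ZMod m → Module.End ℂ V :=
    fun a => (m : ℂ)⁻¹ • ∑ j : ZMod m, e (-(a * j)) • F j with hPdef
  have hmC : (m : ℂ) ≠ 0 := Nat.cast_ne_zero.mpr (NeZero.ne m)
  -- the key resolution: ∑ a, e (a * c) • P a = F c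
  have hT : ∀ c : ZMod m, ∑ a : ZMod m, e (a * c) • P a = F c := by
    intro c
    have : ∀ a : ZMod m, e (a * c) • P a
        = (m : ℂ)⁻¹ • ∑ j : ZMod m, (e (a * c) * e (-(a * j))) • F j := by
      intro a
      rw [hPdef]
      rw [smul_comm, Finset.smul_sum]
      congr 1
      refine Finset.sum_congr rfl fun j _ => ?_
      rw [smul_smul]
    simp only [this]
    rw [← Finset.smul_sum, Finset.sum_comm]
    have hinner : ∀ j : ZMod m, ∑ a : ZMod m, (e (a * c) * e (-(a * j))) • F j
        = ((if c - j = 0 then (m : ℂ) else 0)) • F j := by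
      intro j
      rw [← Finset.sum_smul]
      congr 1
      rw [← hsum (c - j)]
      refine Finset.sum_congr rfl fun a _ => ?_
      rw [← he_add]
      congr 1
      ring
    simp only [hinner]
    have : ∀ j : ZMod m, (if c - j = 0 then (m : ℂ) else 0) • F j
        = (if j = c then (m : ℂ) • F c else 0) := by
      intro j
      by_cases h : j = c
      · subst h; simp
      · rw [if_neg h, if_neg, zero_smul]
        rw [sub_eq_zero]
        exact fun hc => h hc.symm
    simp only [this]
    rw [Finset.sum_ite_eq' Finset.univ c, if_pos (Finset.mem_univ c), smul_smul,
      inv_mul_cancel₀ hmC, one_smul]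
  -- idempotency of the P a
  have hIdem : ∀ a : ZMod m, P a * P a = P a := by
    intro a
    have expand : P a * P a = (m : ℂ)⁻¹ • ((m : ℂ)⁻¹ •
        ∑ j : ZMod m, ∑ l : ZMod m, (e (-(a * j)) * e (-(a * l))) • (F j * F l)) := by
      rw [hPdef]
      rw [smul_mul_assoc, mul_smul_comm, Finset.sum_mul]
      congr 2
      refine Finset.sum_congr rfl fun j _ => ?_
      rw [smul_mul_assoc, Finset.mul_sum]
      rw [Finset.smul_sum]
      refine Finset.sum_congr rfl fun l _ => ?_
      rw [mul_smul_comm, smul_smul]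
    rw [expand]
    have hjl : ∀ j l : ZMod m, (e (-(a * j)) * e (-(a * l))) • (F j * F l)
        = e (-(a * (j + l))) • F (j + l) := by
      intro j l
      rw [← hF_add, ← he_add]
      congr 2
      ring
    simp only [hjl]
    have hshift : ∀ j : ZMod m, ∑ l : ZMod m, e (-(a * (j + l))) • F (j + l)
        = ∑ s : ZMod m, e (-(a * s)) • F s :=
      fun j => Fintype.sum_equiv (Equiv.addLeft j) _ _ fun l => rfl
    simp only [hshift]
    rw [Finset.sum_const, Finset.card_univ, ZMod.card, ← Nat.cast_smul_eq_nsmul ℂ m,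
      smul_smul, smul_smul]
    rw [show ((m : ℂ)⁻¹ * (m : ℂ)⁻¹ * (m : ℂ)) = (m : ℂ)⁻¹ by field_simp]
  -- trace of each P a is a natural number hence conj-invariant
  set tr : Module.End ℂ V →ₗ[ℂ] ℂ := LinearMap.trace ℂ V with htrdef
  have ht : ∀ a : ZMod m, (starRingEnd ℂ) (tr (P a)) = tr (P a) := by
    intro a
    obtain ⟨p, hp⟩ := (LinearMap.isProj_iff_isIdempotentElem (P a)).mpr
      (by exact hIdem a)
    rw [htrdef, hp.trace, map_natCast]
  -- conj of e
  have hconj : ∀ a : ZMod m, (starRingEnd ℂ) (e a) = e (-a) := by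
    intro a
    have hcω : (starRingEnd ℂ) ω = ω⁻¹ := by
      rw [hωdef, ← Complex.exp_conj]
      rw [← Complex.exp_neg]
      congr 1
      simp [map_div₀, Complex.conj_I, map_ofNat]
      ring
    have hinv : e (-a) = (e a)⁻¹ := by
      refine eq_inv_of_mul_eq_one_left ?_
      rw [← he_add, neg_add_cancel, he0]
    rw [hinv, hedef]
    simp only [map_pow, hcω, inv_pow]
  -- main computation
  have hf1 : F 1 = f := by
    simp only [hFdef]
    rw [ZMod.val_one m, pow_one]
  have hFneg1 : F (-1) = V.ρ x⁻¹ := by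
    refine left_inv_eq_right_inv (a := f) ?_ ?_
    · rw [← hf1, ← hF_add, neg_add_cancel, hF0]
    · rw [hfdef, ← map_mul, mul_inv_cancel, map_one]
  have hchar1 : V.character x = ∑ a : ZMod m, e a * tr (P a) := by
    have := congrArg tr (hT 1)
    rw [map_sum] at this
    simp only [LinearMap.map_smul, smul_eq_mul, mul_one] at this
    rw [FDRep.character, ← hfdef, ← hf1, ← this]
  have hchar2 : V.character x⁻¹ = ∑ a : ZMod m, e (-a) * tr (P a) := by
    have := congrArg tr (hT (-1))
    rw [map_sum] at this
    simp only [LinearMap.map_smul, smul_eq_mul, mul_neg_one] at this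
    rw [FDRep.character, ← hFneg1, ← this]
  rw [hchar1, hchar2, map_sum]
  refine Finset.sum_congr rfl fun a _ => ?_
  rw [map_mul, hconj, ht]

lemma aux_class_sum {G : Type} [Group G] [Fintype G] {n : ℕ}
    (g : Fin (n + 1) → G) (hg : ∀ x : G, ∃! k : Fin (n + 1), IsConj (g k) x)
    (F : G → ℂ) (hF : ∀ x y : G, IsConj x y → F x = F y) :
    ∑ x : G, F x = ∑ k : Fin (n + 1), (classCard (g k) : ℂ) * F (g k) := by
  classical
  choose φ hφ using fun x => (hg x).exists
  have huniq : ∀ (x : G) (k : Fin (n + 1)), IsConj (g k) x → φ x = k := by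
    intro x k hk
    rcases hg x with ⟨k', _, hu⟩
    rw [hu _ (hφ x), hu _ hk]
  rw [← Finset.sum_fiberwise Finset.univ φ F]
  refine Finset.sum_congr rfl fun k _ => ?_
  have hmem : ∀ x ∈ Finset.univ.filter (fun x => φ x = k), F x = F (g k) := by
    intro x hx
    rw [Finset.mem_filter] at hx
    exact (hF (g k) x (hx.2 ▸ hφ x)).symm
  rw [Finset.sum_congr rfl hmem, Finset.sum_const, nsmul_eq_mul]
  have hset : Finset.univ.filter (fun x => φ x = k)
      = Finset.univ.filter (fun x => IsConj (g k) x) := by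
    ext x
    simp only [Finset.mem_filter, Finset.mem_univ, true_and]
    exact ⟨fun h => h ▸ hφ x, huniq x k⟩
  rw [hset, classCard, Nat.card_eq_fintype_card, Fintype.card_subtype]

lemma aux_row_orth {G : Type} [Group G] [Fintype G] {n : ℕ}
    (g : Fin (n + 1) → G) (hg : ∀ x : G, ∃! k : Fin (n + 1), IsConj (g k) x)
    (R : Fin (n + 1) → FDRep ℂ G)
    (hsimple : ∀ i, Simple (R i))
    (hdist : ∀ i j, i ≠ j → ¬ Nonempty (R i ≅ R j)) (i j : Fin (n + 1)) :
    (Fintype.card G : ℂ)⁻¹ * ∑ k : Fin (n + 1), (classCard (g k) : ℂ) *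
      ((R i).character (g k) * (starRingEnd ℂ) ((R j).character (g k)))
      = if i = j then 1 else 0 := by
  haveI := hsimple i
  haveI := hsimple j
  have hcN : (Fintype.card G : ℂ) ≠ 0 := Nat.cast_ne_zero.mpr Fintype.card_ne_zero
  haveI : Invertible (Fintype.card G : ℂ) := invertibleOfNonzero hcN
  have hclass : ∀ x y : G, IsConj x y →
      (R i).character x * (starRingEnd ℂ) ((R j).character x)
        = (R i).character y * (starRingEnd ℂ) ((R j).character y) := by
    intro x y hxy
    obtain ⟨c, hc⟩ := isConj_iff.mp hxy
    rw [← hc, FDRep.char_conj, FDRep.char_conj]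
  have hcs := aux_class_sum g hg
    (fun x => (R i).character x * (starRingEnd ℂ) ((R j).character x)) hclass
  rw [← hcs]
  have : ∀ x : G, (R i).character x * (starRingEnd ℂ) ((R j).character x)
      = (R i).character x * (R j).character x⁻¹ := by
    intro x
    rw [char_inv_eq_conj]
  rw [Finset.sum_congr rfl fun x _ => this x]
  have horth : (Fintype.card G : ℂ)⁻¹ * ∑ x : G, (R i).character x * (R j).character x⁻¹
      = if Nonempty (R i ≅ R j) then 1 else 0 := by
    have h := FDRep.char_orthonormal (R i) (R j)
    rw [Nat.card_eq_fintype_card] at h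
    exact_mod_cast h
  rw [horth]
  by_cases hij : i = j
  · subst hij
    rw [if_pos ⟨Iso.refl _⟩, if_pos rfl]
  · rw [if_neg (hdist i j hij), if_neg hij]

open Polynomial in
lemma aux_iter_deriv_sum {ι : Type*} (s : Finset ι) (f : ι → ℂ[X]) (i : ℕ) :
    (⇑derivative)^[i] (∑ c ∈ s, f c) = ∑ c ∈ s, (⇑derivative)^[i] (f c) := by
  induction i with
  | zero => simp
  | succ i ih =>
    rw [Function.iterate_succ_apply', ih, map_sum]
    exact Finset.sum_congr rfl fun c _ => (Function.iterate_succ_apply' _ _ _).symm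

open Polynomial in
lemma aux_iter_deriv_mul_C (p : ℂ[X]) (r : ℂ) (i : ℕ) :
    (⇑derivative)^[i] (p * C r) = (⇑derivative)^[i] p * C r := by
  rw [mul_comm, Polynomial.iterate_derivative_C_mul, mul_comm]

open Polynomial in
lemma aux_deriv_eval (i : ℕ) (E : ℂ[X])
    (h : ((1 : ℂ[X]) - X) ^ (i + 1) ∣ E) :
    Polynomial.eval 1 ((⇑derivative)^[i] E) = 0 := by
  induction i generalizing E with
  | zero =>
    rcases h with ⟨F, rfl⟩
    simp
  | succ i ih =>
    rcases h with ⟨F, rfl⟩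
    rw [Function.iterate_succ_apply]
    apply ih
    rw [derivative_mul, derivative_pow]
    refine dvd_add ?_ ?_
    · rw [show i + 1 + 1 - 1 = i + 1 from rfl]
      exact dvd_mul_of_dvd_left (dvd_mul_of_dvd_left (dvd_mul_left _ _) _) _
    · exact dvd_mul_of_dvd_left (pow_dvd_pow _ (Nat.le_succ _)) _

theorem stmt9 {G : Type} [Group G] [Fintype G] {n : ℕ}
    (g : Fin (n + 1) → G) (hg1 : g 0 = 1)
    (hg : ∀ x : G, ∃! k : Fin (n + 1), IsConj (g k) x)
    (R : Fin (n + 1) → FDRep ℂ G)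
    (hsimple : ∀ i, Simple (R i))
    (htriv : ∀ x : G, (R 0).character x = 1)
    (hdist : ∀ i j, i ≠ j → ¬ Nonempty (R i ≅ R j))
    {d : ℕ} (hd : 1 ≤ d) (ρ : G →* Matrix.GeneralLinearGroup (Fin d) ℂ)
    -- `S` : the Molien matrix of `ρ` over `ℂ(q)`
    (S : Fin (n + 1) → Fin (n + 1) → RatFunc ℂ)
    (hS : ∀ i j, S i j =
      RatFunc.C ((Fintype.card G : ℂ)⁻¹) *
        ∑ k : Fin (n + 1), (classCard (g k) : RatFunc ℂ) *
          RatFunc.C ((R i).character (g k)) *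
          RatFunc.C ((starRingEnd ℂ) ((R j).character (g k))) / molienDetRat ρ (g k))
    (nn : Fin d → ℕ) (hnn : ∀ t, 0 < nn t)
    -- every entry of `D(q) = (Π_t (1 − q^{n_t})) · S(q)` is a polynomial
    (D : Matrix (Fin (n + 1)) (Fin (n + 1)) (Polynomial ℂ))
    (hD : ∀ i j, algebraMap (Polynomial ℂ) (RatFunc ℂ) (D i j) =
      (∏ t : Fin d, ((1 : RatFunc ℂ) - RatFunc.X ^ nn t)) * S i j)
    -- `B` : the affine Cartan-type matrix, the value at `q = 1` of the graded
    -- Clebsch–Gordan matrix of the alternating sum of the exterior powers of `ρ`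
    (B : Matrix (Fin (n + 1)) (Fin (n + 1)) ℂ)
    (hB : ∀ i j, B i j =
      (Fintype.card G : ℂ)⁻¹ *
        ∑ k : Fin (n + 1), (classCard (g k) : ℂ) *
          (R i).character (g k) * (starRingEnd ℂ) ((R j).character (g k)) *
          Matrix.det ((1 : Matrix (Fin d) (Fin d) ℂ) - (ρ (g k) : Matrix (Fin d) (Fin d) ℂ))) :
    ∀ i : ℕ, i < d →
      (Matrix.of fun a b : Fin (n + 1) =>
          Polynomial.eval 1 ((⇑Polynomial.derivative)^[i] (D a b))) * B ^ (i + 1) = 0 := by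
  classical
  intro i hi
  have hN : (Fintype.card G : ℂ) ≠ 0 := Nat.cast_ne_zero.mpr Fintype.card_ne_zero
  set δ : Fin (n + 1) → ℂ := fun k =>
    Matrix.det ((1 : Matrix (Fin d) (Fin d) ℂ) - (ρ (g k) : Matrix (Fin d) (Fin d) ℂ)) with hδdef
  set A : ℂ →+* RatFunc ℂ := RatFunc.C with hAdef
  set Xc : Matrix (Fin (n + 1)) (Fin (n + 1)) ℂ :=
    Matrix.of (fun i k => (R i).character (g k)) with hXcdef
  set Yc : Matrix (Fin (n + 1)) (Fin (n + 1)) ℂ := Matrix.of (fun k j =>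
    (Fintype.card G : ℂ)⁻¹ * (classCard (g k) : ℂ) *
      (starRingEnd ℂ) ((R j).character (g k))) with hYcdef
  have hXY : Xc * Yc = 1 := by
    ext a b
    rw [Matrix.mul_apply, Matrix.one_apply, ← aux_row_orth g hg R hsimple hdist a b,
      Finset.mul_sum]
    refine Finset.sum_congr rfl fun k _ => ?_
    simp only [hXcdef, hYcdef, Matrix.of_apply]
    ring
  have hYX : Yc * Xc = 1 := mul_eq_one_comm.mp hXY
  -- B = Xc * diagonal δ * Yc
  have hBc : B = Xc * Matrix.diagonal δ * Yc := by
    ext a b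
    rw [Matrix.mul_apply, hB a b, Finset.mul_sum]
    refine Finset.sum_congr rfl fun k _ => ?_
    rw [Matrix.mul_diagonal]
    simp only [hXcdef, hYcdef, Matrix.of_apply]
    ring
  -- powers of B
  have hBpowc : ∀ m : ℕ, B ^ (m + 1) = Xc * (Matrix.diagonal δ) ^ (m + 1) * Yc := by
    intro m
    induction m with
    | zero => rw [pow_one, pow_one, hBc]
    | succ m ih =>
      rw [pow_succ, ih, hBc]
      simp only [Matrix.mul_assoc]
      rw [← Matrix.mul_assoc Yc Xc, hYX, Matrix.one_mul,
        ← Matrix.mul_assoc (Matrix.diagonal δ ^ (m + 1)), ← pow_succ]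
  -- pass to RatFunc matrices
  set X' := Xc.map A with hX'def
  set Y' := Yc.map A with hY'def
  set mol : Fin (n + 1) → RatFunc ℂ := fun k => molienDetRat ρ (g k) with hmoldef
  have hYX' : Y' * X' = 1 := by
    rw [hY'def, hX'def, ← Matrix.map_mul, hYX, Matrix.map_one A (map_zero A) (map_one A)]
  have hSmat : Matrix.of S = X' * Matrix.diagonal (fun k => (mol k)⁻¹) * Y' := by
    ext a b
    rw [Matrix.of_apply, hS a b, Matrix.mul_apply, Finset.mul_sum]
    refine Finset.sum_congr rfl fun k _ => ?_
    rw [Matrix.mul_diagonal, hX'def, hY'def, Matrix.map_apply, Matrix.map_apply]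
    simp only [hXcdef, hYcdef, Matrix.of_apply]
    rw [div_eq_mul_inv, map_mul, map_mul, ← map_natCast A (classCard (g k))]
    ring
  have hdiagmap : ((Matrix.diagonal δ) ^ (i + 1)).map A
      = Matrix.diagonal (fun k => A (δ k) ^ (i + 1)) := by
    rw [Matrix.diagonal_pow, Matrix.diagonal_map (map_zero A)]
    congr 1
    funext k
    simp [map_pow]
  have hB' : (B ^ (i + 1)).map A
      = X' * Matrix.diagonal (fun k => A (δ k) ^ (i + 1)) * Y' := by
    rw [hBpowc i, Matrix.map_mul, Matrix.map_mul, hdiagmap, ← hX'def, ← hY'def]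
  have hkey : ∀ a b : Fin (n + 1), (∑ c : Fin (n + 1), S a c * A ((B ^ (i + 1)) c b))
      = ∑ k : Fin (n + 1), X' a k * ((mol k)⁻¹ * A (δ k) ^ (i + 1)) * Y' k b := by
    intro a b
    have h1 : (∑ c : Fin (n + 1), S a c * A ((B ^ (i + 1)) c b))
        = (Matrix.of S * (B ^ (i + 1)).map A) a b := by
      rw [Matrix.mul_apply]
      rfl
    rw [h1, hSmat, hB']
    rw [show X' * Matrix.diagonal (fun k => (mol k)⁻¹) * Y' *
          (X' * Matrix.diagonal (fun k => A (δ k) ^ (i + 1)) * Y')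
        = X' * (Matrix.diagonal (fun k => (mol k)⁻¹) *
            Matrix.diagonal (fun k => A (δ k) ^ (i + 1))) * Y' from by
      simp only [Matrix.mul_assoc]
      rw [← Matrix.mul_assoc Y' X', hYX', Matrix.one_mul]]
    rw [Matrix.diagonal_mul_diagonal, Matrix.mul_apply]
    refine Finset.sum_congr rfl fun k _ => ?_
    rw [Matrix.mul_diagonal]
  -- polynomial data
  set PP : Polynomial ℂ := ∏ t : Fin d, (1 - Polynomial.X ^ nn t) with hPPdef
  have hPPalg : algebraMap (Polynomial ℂ) (RatFunc ℂ) PP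
      = ∏ t : Fin d, ((1 : RatFunc ℂ) - RatFunc.X ^ nn t) := by
    rw [hPPdef, map_prod]
    refine Finset.prod_congr rfl fun t _ => ?_
    rw [map_sub, map_one, map_pow, RatFunc.algebraMap_X]
  set p : Fin (n + 1) → Polynomial ℂ := fun k =>
    Matrix.det ((1 : Matrix (Fin d) (Fin d) (Polynomial ℂ)) -
      ((ρ (g k) : Matrix (Fin d) (Fin d) ℂ)).map fun c => Polynomial.X * Polynomial.C c)
    with hpdef
  have hpalg : ∀ k, algebraMap (Polynomial ℂ) (RatFunc ℂ) (p k) = mol k := by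
    intro k
    rw [hpdef, hmoldef]
    show (algebraMap (Polynomial ℂ) (RatFunc ℂ)) (Matrix.det _) = molienDetRat ρ (g k)
    rw [RingHom.map_det, molienDetRat]
    congr 1
    ext u v
    simp only [RingHom.mapMatrix_apply, Matrix.map_apply, Matrix.sub_apply, Matrix.one_apply,
      map_sub, map_mul, RatFunc.algebraMap_X, RatFunc.algebraMap_C, apply_ite, map_one, map_zero]
  have hpeval : ∀ k, Polynomial.eval 1 (p k) = δ k := by
    intro k
    rw [hpdef, hδdef]
    show Polynomial.eval 1 (Matrix.det _) = _
    rw [← Polynomial.coe_evalRingHom, RingHom.map_det]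
    congr 1
    ext u v
    simp only [RingHom.mapMatrix_apply, Matrix.map_apply, Matrix.sub_apply, Matrix.one_apply,
      map_sub, Polynomial.coe_evalRingHom, Polynomial.eval_mul, Polynomial.eval_X,
      Polynomial.eval_C, apply_ite, Polynomial.eval_one, Polynomial.eval_zero, one_mul]
  set K : Finset (Fin (n + 1)) := Finset.univ.filter (fun k => δ k ≠ 0) with hKdef
  set Q : Polynomial ℂ := ∏ k ∈ K, p k with hQdef
  have hQeval : Polynomial.eval 1 Q ≠ 0 := by
    rw [hQdef, Polynomial.eval_prod]
    refine Finset.prod_ne_zero_iff.mpr fun k hk => ?_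
    rw [hpeval]
    exact (Finset.mem_filter.mp hk).2
  have hinj : Function.Injective (algebraMap (Polynomial ℂ) (RatFunc ℂ)) :=
    IsFractionRing.injective (Polynomial ℂ) (RatFunc ℂ)
  have hpkne : ∀ k ∈ K, algebraMap (Polynomial ℂ) (RatFunc ℂ) (p k) ≠ 0 := by
    intro k hk
    have : p k ≠ 0 := by
      intro h0
      apply (Finset.mem_filter.mp hk).2
      rw [← hpeval k, h0, Polynomial.eval_zero]
    simpa using fun h => this (hinj (by rw [h, map_zero]))
  -- entrywise final goal
  ext a b
  rw [Matrix.mul_apply, Matrix.zero_apply]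
  set E : Polynomial ℂ := ∑ c : Fin (n + 1), D a c * Polynomial.C ((B ^ (i + 1)) c b)
    with hEdef
  have hEeval : Polynomial.eval 1 ((⇑Polynomial.derivative)^[i] E)
      = ∑ c : Fin (n + 1), Polynomial.eval 1 ((⇑Polynomial.derivative)^[i] (D a c))
          * (B ^ (i + 1)) c b := by
    rw [hEdef, aux_iter_deriv_sum, Polynomial.eval_finset_sum]
    refine Finset.sum_congr rfl fun c _ => ?_
    rw [aux_iter_deriv_mul_C, Polynomial.eval_mul, Polynomial.eval_C]
  simp only [Matrix.of_apply]
  rw [← hEeval]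
  -- it suffices to show (1 - X)^(i+1) divides E
  have halgE : algebraMap (Polynomial ℂ) (RatFunc ℂ) E
      = algebraMap (Polynomial ℂ) (RatFunc ℂ) PP *
          ∑ k : Fin (n + 1), X' a k * ((mol k)⁻¹ * A (δ k) ^ (i + 1)) * Y' k b := by
    rw [hEdef, map_sum, ← hkey a b, Finset.mul_sum]
    refine Finset.sum_congr rfl fun c _ => ?_
    rw [map_mul, hD a c, ← hPPalg]
    rw [show (algebraMap (Polynomial ℂ) (RatFunc ℂ)) (Polynomial.C ((B ^ (i + 1)) c b))
        = A ((B ^ (i + 1)) c b) from RatFunc.algebraMap_C _]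
    ring
  have hEQ : E * Q = ∑ k ∈ K,
      PP * Polynomial.C (Xc a k * δ k ^ (i + 1) * Yc k b) * ∏ l ∈ K.erase k, p l := by
    apply hinj
    rw [map_mul, halgE, map_sum, Finset.mul_sum, Finset.sum_mul]
    have hcond : ∀ x ∈ Finset.univ,
        (algebraMap (Polynomial ℂ) (RatFunc ℂ) PP *
          (X' a x * ((mol x)⁻¹ * A (δ x) ^ (i + 1)) * Y' x b)) *
            algebraMap (Polynomial ℂ) (RatFunc ℂ) Q ≠ 0 → δ x ≠ 0 := by
      intro x _
      contrapose!
      intro h0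
      rw [h0, map_zero, zero_pow (Nat.succ_ne_zero i)]
      ring
    rw [← Finset.sum_filter_of_ne hcond, ← hKdef]
    refine Finset.sum_congr rfl fun k hk => ?_
    have hpk := hpkne k hk
    rw [map_mul, map_mul, map_prod, hQdef, map_prod,
      ← Finset.mul_prod_erase K (fun l => algebraMap (Polynomial ℂ) (RatFunc ℂ) (p l)) hk,
      ← hpalg k]
    rw [show (algebraMap (Polynomial ℂ) (RatFunc ℂ)) (Polynomial.C (Xc a k * δ k ^ (i + 1) * Yc k b))
        = A (Xc a k * δ k ^ (i + 1) * Yc k b) from RatFunc.algebraMap_C _]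
    rw [map_mul, map_mul, map_pow]
    rw [hX'def, hY'def, Matrix.map_apply, Matrix.map_apply]
    have hpk' : (algebraMap (Polynomial ℂ) (RatFunc ℂ)) (p k) ≠ 0 := by
      rw [hpalg k] at hpk ⊢
      exact hpk
    field_simp
    rw [map_prod]
  -- divisibility
  have hprime : Prime ((1 : Polynomial ℂ) - Polynomial.X) := by
    rw [show ((1 : Polynomial ℂ) - Polynomial.X) = -(Polynomial.X - Polynomial.C 1) from by
      rw [map_one]; ring]
    exact (Polynomial.irreducible_X_sub_C (1 : ℂ)).prime.neg
  have hPPdvd : ((1 : Polynomial ℂ) - Polynomial.X) ^ (i + 1) ∣ PP := by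
    refine dvd_trans (pow_dvd_pow _ hi) ?_
    rw [show ((1 : Polynomial ℂ) - Polynomial.X) ^ d
        = ∏ _t : Fin d, ((1 : Polynomial ℂ) - Polynomial.X) from by
      rw [Finset.prod_const, Finset.card_univ, Fintype.card_fin]]
    exact Finset.prod_dvd_prod_of_dvd _ _ fun t _ => by
      simpa using sub_dvd_pow_sub_pow (1 : Polynomial ℂ) Polynomial.X (nn t)
  have hdvdEQ : ((1 : Polynomial ℂ) - Polynomial.X) ^ (i + 1) ∣ E * Q := by
    rw [hEQ]
    exact Finset.dvd_sum fun k _ =>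
      dvd_mul_of_dvd_left (dvd_mul_of_dvd_left hPPdvd _) _
  have hnotdvd : ¬ ((1 : Polynomial ℂ) - Polynomial.X) ∣ Q := by
    rintro ⟨F, hF⟩
    apply hQeval
    rw [hF, Polynomial.eval_mul, Polynomial.eval_sub, Polynomial.eval_one, Polynomial.eval_X,
      sub_self, zero_mul]
  have hdvdE : ((1 : Polynomial ℂ) - Polynomial.X) ^ (i + 1) ∣ E :=
    hprime.pow_dvd_of_dvd_mul_right (i + 1) hnotdvd hdvdEQ
  exact aux_deriv_eval i E hdvdE
end
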